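/- Let V : ℂ^{d_A} → ℂ^{d_B} ⊗ ℂ^{d_E} be a linear isometry (V†V = I), defining the quantum channel N(ρ) = Tr_E(VρV†) and its complementary channel N̂(ρ) = Tr_B(VρV†). Let G be a Hermitian positive semidefinite d_A×d_A matrix, P ≥ 0, ε ∈ [0,1], M ≥ 2 an integer, and δ ∈ (1/M, 1/3). Let {ρ^m}_{m=1}^M be density matrices on ℂ^{d_A}, let {Λ^m}_{m=1}^M be positive semidefinite d_B×d_B matrices with ∑_{m=1}^M Λ^m = I (a POVM), and let ω be a density matrix on ℂ^{d_E}. Suppose the average conditions hold: (1/M)∑_{m=1}^M Tr(G ρ^m) ≤ P, (1/M)∑_{m=1}^M Tr(Λ^m N(ρ^m)) ≥ 1 − ε, and (1/M)∑_{m=1}^M (1/2)‖N̂(ρ^m) − ω‖₁ ≤ ε. Then there exists a subset S ⊆ {1,…,M} of cardinality ⌊δM⌋ such that for every m ∈ S: Tr(G ρ^m) ≤ P/(1−3δ), Tr(Λ^m N(ρ^m)) ≥ 1 − ε/(δ − 1/M), and (1/2)‖N̂(ρ^m) − ω‖₁ ≤ ε/(δ − 1/M). -/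

import Mathlib

open Matrix BigOperators Kronecker ComplexOrder

noncomputable section

def IsDensityMatrix {n : Type*} [Fintype n] (ρ : Matrix n n ℂ) : Prop :=
  ρ.PosSemidef ∧ ρ.trace = 1

def IsQuantumChannel {nA nB : Type*} [Fintype nA] [Fintype nB] [DecidableEq nA]
    (N : Matrix nA nA ℂ → Matrix nB nB ℂ) : Prop :=
  ∃ (k : ℕ) (K : Fin k → Matrix nB nA ℂ),
    (∀ X, N X = ∑ l, K l * X * (K l)ᴴ) ∧ (∑ l, (K l)ᴴ * K l) = 1

def ptraceSnd {n m : Type*} [Fintype m] (X : Matrix (n × m) (n × m) ℂ) : Matrix n n ℂ :=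
  Matrix.of fun a a' => ∑ b, X (a, b) (a', b)

def ptraceFst {n m : Type*} [Fintype n] (X : Matrix (n × m) (n × m) ℂ) : Matrix m m ℂ :=
  Matrix.of fun b b' => ∑ a, X (a, b) (a, b')

def vonNeumannEntropy {n : Type*} [Fintype n] [DecidableEq n] (ρ : Matrix n n ℂ) : ℝ :=
  if h : ρ.IsHermitian then ∑ i, Real.negMulLog (h.eigenvalues i) else 0

def traceNorm {m n : Type*} [Fintype m] [Fintype n] [DecidableEq n] (A : Matrix m n ℂ) : ℝ :=
  (((Matrix.posSemidef_conjTranspose_mul_self A).1.eigenvectorUnitary : Matrix n n ℂ) *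
    Matrix.diagonal ((fun x : ℝ => (x : ℂ)) ∘ (Real.sqrt ·) ∘ (Matrix.posSemidef_conjTranspose_mul_self A).1.eigenvalues) *
    (star (Matrix.posSemidef_conjTranspose_mul_self A).1.eigenvectorUnitary : Matrix n n ℂ)).trace.re

def tensorIdChannel {nA nB : Type*} (d : Type*)
    (C : Matrix nA nA ℂ → Matrix nB nB ℂ)
    (X : Matrix (d × nA) (d × nA) ℂ) : Matrix (d × nB) (d × nB) ℂ :=
  Matrix.of fun p q => C (Matrix.of fun a a' => X (p.1, a) (q.1, a')) p.2 q.2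

def maxEntangled (M : ℕ) : Matrix (Fin M × Fin M) (Fin M × Fin M) ℂ :=
  Matrix.of fun p q => if p.1 = p.2 ∧ q.1 = q.2 then (M : ℂ)⁻¹ else 0

def maxEntVec (M : ℕ) : Fin M × Fin M → ℂ :=
  fun p => if p.1 = p.2 then ((Real.sqrt M : ℝ) : ℂ)⁻¹ else 0

def fidVec {n : Type*} [Fintype n] (ψ : n → ℂ) (ρ : Matrix n n ℂ) : ℝ :=
  (star ψ ⬝ᵥ ρ.mulVec ψ).re

def thermal {n : Type*} [Fintype n] [DecidableEq n] (β : ℝ) (G : Matrix n n ℂ) : Matrix n n ℂ :=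
  ((NormedSpace.exp ((-β : ℂ) • G)).trace)⁻¹ • NormedSpace.exp ((-β : ℂ) • G)

def l2OpNorm {m n : ℕ} (A : Matrix (Fin m) (Fin n) ℂ) : ℝ :=
  ‖(Matrix.toEuclideanLin A).toContinuousLinearMap‖

end
open Matrix BigOperators ComplexOrder Finset

noncomputable section

lemma trace_re_nonneg' {n : Type*} [Fintype n] {A : Matrix n n ℂ} (hA : A.PosSemidef) :
    0 ≤ A.trace.re := by
  classical
  rw [Matrix.trace, Complex.re_sum]
  refine Finset.sum_nonneg fun i _ => ?_
  have := hA.re_dotProduct_nonneg (Pi.single i 1)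
  simpa [dotProduct, Matrix.mulVec, Pi.single_apply, Finset.sum_ite_eq,
    Finset.sum_ite_eq', Matrix.diag] using this

open scoped MatrixOrder in
lemma trace_mul_re_nonneg' {n : Type*} [Fintype n] {A B : Matrix n n ℂ}
    (hA : A.PosSemidef) (hB : B.PosSemidef) : 0 ≤ (A * B).trace.re := by
  classical
  obtain ⟨C, hC⟩ := CStarAlgebra.nonneg_iff_eq_star_mul_self.mp hB.nonneg
  rw [hC, Matrix.star_eq_conjTranspose]
  have h1 : (A * (Cᴴ * C)).trace = (C * A * Cᴴ).trace := by
    rw [← Matrix.mul_assoc, Matrix.trace_mul_cycle]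
  rw [h1]
  exact trace_re_nonneg' (hA.mul_mul_conjTranspose_same C)

lemma ptraceSnd_posSemidef {n m : Type*} [Fintype n] [Fintype m]
    {X : Matrix (n × m) (n × m) ℂ} (hX : X.PosSemidef) : (ptraceSnd X).PosSemidef := by
  classical
  refine Matrix.PosSemidef.of_dotProduct_mulVec_nonneg ?_ ?_
  · ext a a'
    simp only [Matrix.conjTranspose_apply, ptraceSnd, Matrix.of_apply, star_sum]
    refine Finset.sum_congr rfl fun b _ => ?_
    have := congrFun (congrFun hX.1 (a, b)) (a', b)
    simpa [Matrix.conjTranspose_apply] using this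
  · intro v
    have key : star v ⬝ᵥ (ptraceSnd X).mulVec v
        = ∑ b, star (fun p : n × m => if p.2 = b then v p.1 else 0) ⬝ᵥ
            X.mulVec (fun p : n × m => if p.2 = b then v p.1 else 0) := by
      simp only [dotProduct, Matrix.mulVec, ptraceSnd, Matrix.of_apply,
        Fintype.sum_prod_type, Pi.star_apply]
      rw [Finset.sum_comm]
      refine Finset.sum_congr rfl fun b _ => ?_
      simp only [apply_ite (star : ℂ → ℂ), star_zero, ite_mul, zero_mul,
        Finset.sum_ite_eq', Finset.mem_univ, if_true, Finset.mul_sum, Finset.sum_mul]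
      rw [Finset.sum_comm]
      refine Finset.sum_congr rfl fun i _ => ?_
      simp [Finset.sum_ite_eq, Finset.sum_ite_eq', mul_ite, mul_zero]
    rw [key]
    exact Finset.sum_nonneg fun b _ => hX.dotProduct_mulVec_nonneg _

lemma ptraceSnd_trace {n m : Type*} [Fintype n] [Fintype m]
    (X : Matrix (n × m) (n × m) ℂ) : (ptraceSnd X).trace = X.trace := by
  simp [Matrix.trace, ptraceSnd, Matrix.diag, Fintype.sum_prod_type]

end

open Finset in
lemma markov_card {M : ℕ} (f : Fin M → ℝ) (c d : ℝ) (hf : ∀ m, 0 ≤ f m)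
    (hc : 0 ≤ c) (hd : 0 < d) (hsum : ∑ m, f m ≤ M * c) :
    ((Finset.univ.filter (fun m => c / d < f m)).card : ℝ) ≤ M * d := by
  rcases eq_or_lt_of_le hc with h0 | hc
  · have hempty : (Finset.univ.filter (fun m : Fin M => c / d < f m)) = ∅ := by
      refine Finset.filter_false_of_mem fun m _ => ?_
      have h1 : f m ≤ ∑ k, f k := by
        exact Finset.single_le_sum (fun k _ => hf k) (Finset.mem_univ m)
      have : f m ≤ 0 := by
        have : (M : ℝ) * c = 0 := by rw [← h0]; ring
        linarith
      rw [← h0, zero_div]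
      linarith [hf m, this]
    rw [hempty]
    simp
    positivity
  · set s := Finset.univ.filter (fun m : Fin M => c / d < f m) with hs
    have h1 : (s.card : ℝ) * (c / d) ≤ ∑ m ∈ s, f m := by
      have := Finset.card_nsmul_le_sum s f (c / d)
        (fun m hm => le_of_lt (Finset.mem_filter.mp hm).2)
      simpa [nsmul_eq_mul] using this
    have h2 : ∑ m ∈ s, f m ≤ ∑ m, f m :=
      Finset.sum_le_sum_of_subset_of_nonneg (Finset.subset_univ s) (fun m _ _ => hf m)
    have h3 : (s.card : ℝ) * (c / d) ≤ M * c := by linarith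
    have hcd : 0 < c / d := div_pos hc hd
    rw [← mul_le_mul_iff_of_pos_right hcd]
    calc (s.card : ℝ) * (c / d) ≤ M * c := h3
      _ = M * d * (c / d) := by field_simp
/-- Code conversion from secret key transmission with an average energy
constraint to private communication with a uniform energy constraint. -/
theorem secret_key_transmission_to_private_communication
    (dA dB dE M : ℕ) (hM : 2 ≤ M)
    (V : Matrix (Fin dB × Fin dE) (Fin dA) ℂ) (hV : Vᴴ * V = 1)
    (G : Matrix (Fin dA) (Fin dA) ℂ) (hG : G.PosSemidef)
    (P : ℝ) (hP : 0 ≤ P) (ε : ℝ) (hε : ε ∈ Set.Icc (0 : ℝ) 1)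
    (δ : ℝ) (hδ : δ ∈ Set.Ioo (1 / (M : ℝ)) (1 / 3))
    (ρ : Fin M → Matrix (Fin dA) (Fin dA) ℂ) (hρ : ∀ m, IsDensityMatrix (ρ m))
    (Λ : Fin M → Matrix (Fin dB) (Fin dB) ℂ)
    (hΛpos : ∀ m, (Λ m).PosSemidef) (hΛsum : ∑ m, Λ m = 1)
    (ω : Matrix (Fin dE) (Fin dE) ℂ) (hω : IsDensityMatrix ω)
    (hAvgEnergy : (M : ℝ)⁻¹ * ∑ m, (G * ρ m).trace.re ≤ P)
    (hAvgDec : 1 - ε ≤ (M : ℝ)⁻¹ * ∑ m, (Λ m * ptraceSnd (V * ρ m * Vᴴ)).trace.re)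
    (hAvgSec : (M : ℝ)⁻¹ * ∑ m, (1 / 2 : ℝ) * traceNorm (ptraceFst (V * ρ m * Vᴴ) - ω) ≤ ε) :
    ∃ S : Finset (Fin M), S.card = ⌊δ * M⌋₊ ∧
      ∀ m ∈ S,
        (G * ρ m).trace.re ≤ P / (1 - 3 * δ) ∧
        1 - ε / (δ - 1 / (M : ℝ)) ≤ (Λ m * ptraceSnd (V * ρ m * Vᴴ)).trace.re ∧
        (1 / 2 : ℝ) * traceNorm (ptraceFst (V * ρ m * Vᴴ) - ω) ≤ ε / (δ - 1 / (M : ℝ)) := by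
  classical
  have hM0 : (0 : ℝ) < M := by
    have : 0 < M := lt_of_lt_of_le (by norm_num) hM
    exact_mod_cast this
  obtain ⟨hδ1, hδ2⟩ := hδ
  have hd1 : 0 < 1 - 3 * δ := by linarith
  have hd2 : 0 < δ - 1 / (M : ℝ) := by linarith
  set f1 : Fin M → ℝ := fun m => (G * ρ m).trace.re with hf1def
  set g : Fin M → ℝ := fun m => (Λ m * ptraceSnd (V * ρ m * Vᴴ)).trace.re with hgdef
  set f3 : Fin M → ℝ := fun m =>
    (1 / 2 : ℝ) * traceNorm (ptraceFst (V * ρ m * Vᴴ) - ω) with hf3def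
  have hσ : ∀ m, (ptraceSnd (V * ρ m * Vᴴ)).PosSemidef := fun m =>
    ptraceSnd_posSemidef ((hρ m).1.mul_mul_conjTranspose_same V)
  have hσtr : ∀ m, (ptraceSnd (V * ρ m * Vᴴ)).trace = 1 := by
    intro m
    rw [ptraceSnd_trace, Matrix.trace_mul_cycle, hV, Matrix.one_mul, (hρ m).2]
  have hg1 : ∀ m, g m ≤ 1 := by
    intro m
    have hrest : (1 - Λ m).PosSemidef := by
      have he : ∑ m' ∈ Finset.univ.erase m, Λ m' = 1 - Λ m := by
        rw [Finset.sum_erase_eq_sub (Finset.mem_univ m), hΛsum]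
      rw [← he]
      exact Finset.sum_induction _ _ (fun a b ha hb => ha.add hb) Matrix.PosSemidef.zero
        (fun i _ => hΛpos i)
    have h0 : 0 ≤ ((1 - Λ m) * ptraceSnd (V * ρ m * Vᴴ)).trace.re :=
      trace_mul_re_nonneg' hrest (hσ m)
    have hexp : ((1 - Λ m) * ptraceSnd (V * ρ m * Vᴴ)).trace
        = 1 - (Λ m * ptraceSnd (V * ρ m * Vᴴ)).trace := by
      rw [Matrix.sub_mul, Matrix.one_mul, Matrix.trace_sub, hσtr m]
    rw [hexp] at h0
    simp only [Complex.sub_re, Complex.one_re] at h0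
    show (Λ m * ptraceSnd (V * ρ m * Vᴴ)).trace.re ≤ 1
    linarith
  have hf1nn : ∀ m, 0 ≤ f1 m := fun m => trace_mul_re_nonneg' hG (hρ m).1
  have hf3nn : ∀ m, 0 ≤ f3 m := by
    intro m
    have h : 0 ≤ traceNorm (ptraceFst (V * ρ m * Vᴴ) - ω) := by
      unfold traceNorm
      apply trace_re_nonneg'
      apply Matrix.PosSemidef.mul_mul_conjTranspose_same
      apply Matrix.PosSemidef.diagonal
      intro i
      simp only [Function.comp_apply, Pi.zero_apply]
      exact Complex.zero_le_real.mpr (Real.sqrt_nonneg _)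
    show 0 ≤ (1 / 2 : ℝ) * traceNorm (ptraceFst (V * ρ m * Vᴴ) - ω)
    linarith
  have hsum1 : ∑ m, f1 m ≤ M * P := by
    have h := mul_le_mul_of_nonneg_left hAvgEnergy (le_of_lt hM0)
    rwa [← mul_assoc, mul_inv_cancel₀ (ne_of_gt hM0), one_mul] at h
  have hsum2 : ∑ m, (1 - g m) ≤ M * ε := by
    have h := mul_le_mul_of_nonneg_left hAvgDec (le_of_lt hM0)
    rw [← mul_assoc, mul_inv_cancel₀ (ne_of_gt hM0), one_mul] at h
    have he : ∑ m, (1 - g m) = (M : ℝ) - ∑ m, g m := by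
      rw [Finset.sum_sub_distrib, Finset.sum_const, Finset.card_univ, Fintype.card_fin]
      simp [nsmul_eq_mul]
    have e : (M:ℝ) * (1 - ε) = M - M * ε := by ring
    rw [he]; linarith
  have hsum3 : ∑ m, f3 m ≤ M * ε := by
    have h := mul_le_mul_of_nonneg_left hAvgSec (le_of_lt hM0)
    rwa [← mul_assoc, mul_inv_cancel₀ (ne_of_gt hM0), one_mul] at h
  have hb1 := markov_card f1 P (1 - 3 * δ) hf1nn hP hd1 hsum1
  have hb2 := markov_card (fun m => 1 - g m) ε (δ - 1 / (M : ℝ))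
    (fun m => show (0:ℝ) ≤ 1 - g m by linarith [hg1 m]) hε.1 hd2 hsum2
  have hb3 := markov_card f3 ε (δ - 1 / (M : ℝ)) hf3nn hε.1 hd2 hsum3
  set B1 := Finset.univ.filter (fun m : Fin M => P / (1 - 3 * δ) < f1 m) with hB1
  set B2 := Finset.univ.filter
    (fun m : Fin M => ε / (δ - 1 / (M : ℝ)) < 1 - g m) with hB2
  set B3 := Finset.univ.filter
    (fun m : Fin M => ε / (δ - 1 / (M : ℝ)) < f3 m) with hB3
  set T := Finset.univ.filter (fun m : Fin M =>
    f1 m ≤ P / (1 - 3 * δ) ∧ 1 - g m ≤ ε / (δ - 1 / (M : ℝ)) ∧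
    f3 m ≤ ε / (δ - 1 / (M : ℝ))) with hT
  have hsub : (Finset.univ : Finset (Fin M)) ⊆ ((T ∪ B1) ∪ B2) ∪ B3 := by
    intro m _
    simp only [Finset.mem_union, hT, hB1, hB2, hB3, Finset.mem_filter, Finset.mem_univ,
      true_and]
    rcases le_or_gt (f1 m) (P / (1 - 3 * δ)) with h1 | h1
    · rcases le_or_gt (1 - g m) (ε / (δ - 1 / (M : ℝ))) with h2 | h2
      · rcases le_or_gt (f3 m) (ε / (δ - 1 / (M : ℝ))) with h3 | h3
        · exact Or.inl (Or.inl (Or.inl ⟨h1, h2, h3⟩))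
        · exact Or.inr h3
      · exact Or.inl (Or.inr h2)
    · exact Or.inl (Or.inl (Or.inr h1))
  have hcard : (M : ℝ) ≤ (T.card : ℝ) + B1.card + B2.card + B3.card := by
    have h0 := Finset.card_le_card hsub
    have h1 : (((T ∪ B1) ∪ B2) ∪ B3).card ≤ T.card + B1.card + B2.card + B3.card :=
      calc (((T ∪ B1) ∪ B2) ∪ B3).card ≤ ((T ∪ B1) ∪ B2).card + B3.card :=
            Finset.card_union_le _ _
        _ ≤ (T ∪ B1).card + B2.card + B3.card := by
            have := Finset.card_union_le (T ∪ B1) B2; omega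
        _ ≤ T.card + B1.card + B2.card + B3.card := by
            have := Finset.card_union_le T B1; omega
    have h2 : M ≤ T.card + B1.card + B2.card + B3.card := by
      rw [Finset.card_univ, Fintype.card_fin] at h0; omega
    exact_mod_cast h2
  have hTcard : ⌊δ * (M : ℝ)⌋₊ ≤ T.card := by
    have hfloor : (⌊δ * (M : ℝ)⌋₊ : ℝ) ≤ δ * M := Nat.floor_le (le_of_lt (mul_pos (lt_trans (div_pos one_pos hM0) hδ1) hM0))
    have hM1 : (M : ℝ) * (1 / (M : ℝ)) = 1 := by field_simp
    have e1 : (M:ℝ) * (1 - 3 * δ) = M - 3 * (δ * M) := by ring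
    have e2 : (M:ℝ) * (δ - 1 / (M:ℝ)) = δ * M - 1 := by field_simp
    have hcast : (⌊δ * (M : ℝ)⌋₊ : ℝ) ≤ (T.card : ℝ) := by linarith
    exact_mod_cast hcast
  obtain ⟨S, hST, hScard⟩ := Finset.exists_subset_card_eq hTcard
  refine ⟨S, hScard, fun m hm => ?_⟩
  have hmT := hST hm
  rw [hT, Finset.mem_filter] at hmT
  obtain ⟨-, h1, h2, h3⟩ := hmT
  refine ⟨h1, by linarith, h3⟩
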